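/- Let f be a twice continuously differentiable convex function on an open interval I ⊆ ℝ with f'' > 0 and |f'''(x)| ≤ 2·f''(x)^{3/2} on I (1-self-concordance in one dimension). Then for all x, y ∈ I: (f'(y) - f'(x))·(y - x) ≥ f''(x)·(y-x)² / (1 + √(f''(x))·|y - x|). -/

import Mathlib

/-- One-dimensional self-concordance inequality: if `f` has derivatives
`f', f'', f'''` on the open interval `(a, b)` with `f'' > 0` and
`|f'''| ≤ 2 f''^{3/2}` (1-self-concordance), then for all `x, y ∈ (a, b)`:
`(f'(y) - f'(x))(y - x) ≥ f''(x)(y-x)² / (1 + √(f''(x)) |y - x|)`. -/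
theorem stmt_17 (a b : ℝ) (f f' f'' f''' : ℝ → ℝ)
    (h1 : ∀ x ∈ Set.Ioo a b, HasDerivAt f (f' x) x)
    (h2 : ∀ x ∈ Set.Ioo a b, HasDerivAt f' (f'' x) x)
    (h3 : ∀ x ∈ Set.Ioo a b, HasDerivAt f'' (f''' x) x)
    (hpos : ∀ x ∈ Set.Ioo a b, 0 < f'' x)
    (hsc : ∀ x ∈ Set.Ioo a b, |f''' x| ≤ 2 * (f'' x) ^ ((3:ℝ)/2)) :
    ∀ x ∈ Set.Ioo a b, ∀ y ∈ Set.Ioo a b,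
      f'' x * (y - x) ^ 2 / (1 + Real.sqrt (f'' x) * |y - x|) ≤
        (f' y - f' x) * (y - x) := by
  intro x hx y hy
  set h : ℝ := y - x with hh
  set c : ℝ := f'' x with hcdef
  have hc0 : 0 < c := hpos x hx
  have hsc0 : 0 < Real.sqrt c := Real.sqrt_pos.mpr hc0
  set s : ℝ := Real.sqrt c * |h| with hsdef
  have hs0 : 0 ≤ s := mul_nonneg (Real.sqrt_nonneg _) (abs_nonneg _)
  have hmem : ∀ t ∈ Set.Icc (0:ℝ) 1, x + t * h ∈ Set.Ioo a b := by
    intro t ht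
    have := (convex_Ioo a b).add_smul_sub_mem hx hy ht
    simpa [smul_eq_mul] using this
  have hline : ∀ t : ℝ, HasDerivAt (fun t => x + t * h) h t := fun t => by
    simpa using (hasDerivAt_mul_const h).const_add x
  -- power rewrite
  have hpow : ∀ q : ℝ, 0 < q → q ^ ((3:ℝ)/2) = q * Real.sqrt q := by
    intro q hq
    rw [show (3:ℝ)/2 = 1 + 1/2 by norm_num, Real.rpow_add hq, Real.rpow_one,
      ← Real.sqrt_eq_rpow]
  -- Step 2 : lower bound on f'' along the segment
  have key : ∀ t ∈ Set.Icc (0:ℝ) 1, c / (1 + s * t) ^ 2 ≤ f'' (x + t * h) := by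
    set U : ℝ → ℝ := fun t => (Real.sqrt c)⁻¹ + |h| * t - (Real.sqrt (f'' (x + t * h)))⁻¹
      with hUdef
    have hqpos : ∀ t ∈ Set.Icc (0:ℝ) 1, 0 < f'' (x + t * h) := fun t ht =>
      hpos _ (hmem t ht)
    have hUderiv : ∀ t ∈ Set.Icc (0:ℝ) 1, HasDerivAt U
        (|h| + (f''' (x + t * h) * h / (2 * Real.sqrt (f'' (x + t * h))) /
          (Real.sqrt (f'' (x + t * h))) ^ 2)) t := by
      intro t ht
      have hq0 : 0 < f'' (x + t * h) := hqpos t ht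
      have hq : HasDerivAt (fun u => f'' (x + u * h)) (f''' (x + t * h) * h) t :=
        (h3 _ (hmem t ht)).comp t (hline t)
      have hv : HasDerivAt (fun u => Real.sqrt (f'' (x + u * h)))
          (f''' (x + t * h) * h / (2 * Real.sqrt (f'' (x + t * h)))) t :=
        hq.sqrt hq0.ne'
      have hu : HasDerivAt (fun u => (Real.sqrt (f'' (x + u * h)))⁻¹)
          (-(f''' (x + t * h) * h / (2 * Real.sqrt (f'' (x + t * h)))) /
            (Real.sqrt (f'' (x + t * h))) ^ 2) t :=
        hv.inv (Real.sqrt_pos.mpr hq0).ne'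
      have hlin : HasDerivAt (fun u : ℝ => (Real.sqrt c)⁻¹ + |h| * u) |h| t := by
        simpa using ((hasDerivAt_id t).const_mul |h|).const_add (Real.sqrt c)⁻¹
      have := hlin.sub hu
      exact this.congr_deriv (by ring)
    have hUnonneg : ∀ t ∈ Set.Icc (0:ℝ) 1, 0 ≤ U t := by
      have hmono : MonotoneOn U (Set.Icc (0:ℝ) 1) := by
        apply monotoneOn_of_deriv_nonneg (convex_Icc 0 1)
        · exact fun t ht => ((hUderiv t ht).continuousAt).continuousWithinAt
        · intro t ht
          rw [interior_Icc] at ht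
          exact ((hUderiv t (Set.mem_Icc_of_Ioo ht)).differentiableAt).differentiableWithinAt
        · intro t ht
          rw [interior_Icc] at ht
          have ht' := Set.mem_Icc_of_Ioo ht
          rw [(hUderiv t ht').deriv]
          have hq0 : 0 < f'' (x + t * h) := hqpos t ht'
          have hsq : 0 < Real.sqrt (f'' (x + t * h)) := Real.sqrt_pos.mpr hq0
          have habs : |f''' (x + t * h) * h / (2 * Real.sqrt (f'' (x + t * h))) /
              (Real.sqrt (f'' (x + t * h))) ^ 2| ≤ |h| := by
            rw [abs_div, abs_div, abs_mul]
            rw [abs_of_pos (by positivity : (0:ℝ) < 2 * Real.sqrt (f'' (x + t * h))),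
              abs_of_pos (by positivity : (0:ℝ) < (Real.sqrt (f'' (x + t * h))) ^ 2)]
            rw [div_div, div_le_iff₀ (by positivity)]
            calc |f''' (x + t * h)| * |h| ≤ 2 * (f'' (x + t * h)) ^ ((3:ℝ)/2) * |h| := by
                  exact mul_le_mul_of_nonneg_right (hsc _ (hmem t ht')) (abs_nonneg _)
              _ = |h| * (2 * Real.sqrt (f'' (x + t * h)) *
                    (Real.sqrt (f'' (x + t * h))) ^ 2) := by
                  rw [hpow _ hq0, Real.sq_sqrt hq0.le]
                  ring
          linarith [neg_abs_le (f''' (x + t * h) * h / (2 * Real.sqrt (f'' (x + t * h))) /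
            (Real.sqrt (f'' (x + t * h))) ^ 2), abs_le.mp habs]
      intro t ht
      have h0 : U 0 = 0 := by
        simp [hUdef, ← hcdef]
      have := hmono (Set.left_mem_Icc.mpr zero_le_one) ht ht.1
      linarith [this, h0.symm ▸ this]
    intro t ht
    have hq0 : 0 < f'' (x + t * h) := hqpos t ht
    have hsq : 0 < Real.sqrt (f'' (x + t * h)) := Real.sqrt_pos.mpr hq0
    have hU := hUnonneg t ht
    have hB : (Real.sqrt (f'' (x + t * h)))⁻¹ ≤ (1 + s * t) / Real.sqrt c := by
      have : (Real.sqrt c)⁻¹ + |h| * t = (1 + s * t) / Real.sqrt c := by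
        field_simp [hsdef]
        ring
      simp only [hUdef] at hU
      linarith [this ▸ hU]
    have hBpos : 0 < 1 + s * t := by nlinarith [ht.1, ht.2, hs0]
    have h1' : Real.sqrt c / (1 + s * t) ≤ Real.sqrt (f'' (x + t * h)) := by
      rw [div_le_iff₀ hBpos]
      have := (inv_anti₀ (by positivity) hB)
      rw [inv_inv] at this
      calc Real.sqrt c = Real.sqrt c / (1 + s * t) * (1 + s * t) := by
            field_simp
        _ ≤ Real.sqrt (f'' (x + t * h)) * (1 + s * t) := by
            apply mul_le_mul_of_nonneg_right _ hBpos.le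
            calc Real.sqrt c / (1 + s * t) = ((1 + s * t) / Real.sqrt c)⁻¹ := by
                  rw [inv_div]
              _ ≤ Real.sqrt (f'' (x + t * h)) := this
    calc c / (1 + s * t) ^ 2 = (Real.sqrt c / (1 + s * t)) ^ 2 := by
          rw [div_pow, Real.sq_sqrt hc0.le]
      _ ≤ (Real.sqrt (f'' (x + t * h))) ^ 2 := by
          apply pow_le_pow_left₀ (by positivity) h1'
      _ = f'' (x + t * h) := Real.sq_sqrt hq0.le
  -- Step 3 : integrate the bound
  set G : ℝ → ℝ := fun t => (f' (x + t * h) - f' x) * h - c * h ^ 2 * t / (1 + s * t)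
    with hGdef
  have hGderiv : ∀ t ∈ Set.Icc (0:ℝ) 1, HasDerivAt G
      (f'' (x + t * h) * h * h -
        (c * h ^ 2 * (1 + s * t) - c * h ^ 2 * t * s) / (1 + s * t) ^ 2) t := by
    intro t ht
    have hBpos : 0 < 1 + s * t := by nlinarith [ht.1, ht.2, hs0]
    have hf' : HasDerivAt (fun u => (f' (x + u * h) - f' x) * h)
        (f'' (x + t * h) * h * h) t := by
      have := ((h2 _ (hmem t ht)).comp t (hline t)).sub_const (f' x)
      exact this.mul_const h
    have hnum : HasDerivAt (fun u : ℝ => c * h ^ 2 * u) (c * h ^ 2) t := by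
      simpa using (hasDerivAt_id t).const_mul (c * h ^ 2)
    have hden : HasDerivAt (fun u : ℝ => 1 + s * u) s t := by
      simpa using ((hasDerivAt_id t).const_mul s).const_add 1
    have hdiv := hnum.div hden hBpos.ne'
    exact hf'.sub hdiv
  have hmono : MonotoneOn G (Set.Icc (0:ℝ) 1) := by
    apply monotoneOn_of_deriv_nonneg (convex_Icc 0 1)
    · exact fun t ht => ((hGderiv t ht).continuousAt).continuousWithinAt
    · intro t ht
      rw [interior_Icc] at ht
      exact ((hGderiv t (Set.mem_Icc_of_Ioo ht)).differentiableAt).differentiableWithinAt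
    · intro t ht
      rw [interior_Icc] at ht
      have ht' := Set.mem_Icc_of_Ioo ht
      rw [(hGderiv t ht').deriv]
      have hBpos : 0 < 1 + s * t := by nlinarith [ht'.1, ht'.2, hs0]
      have hk := key t ht'
      have hnum : (c * h ^ 2 * (1 + s * t) - c * h ^ 2 * t * s) / (1 + s * t) ^ 2
          = c / (1 + s * t) ^ 2 * h ^ 2 := by
        field_simp
        ring
      rw [hnum]
      have : c / (1 + s * t) ^ 2 * h ^ 2 ≤ f'' (x + t * h) * h ^ 2 :=
        mul_le_mul_of_nonneg_right hk (sq_nonneg h)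
      nlinarith [this]
  have hG0 : G 0 = 0 := by simp [hGdef]
  have hG1 := hmono (Set.left_mem_Icc.mpr zero_le_one) (Set.right_mem_Icc.mpr zero_le_one)
    zero_le_one
  rw [hG0] at hG1
  have hxy : x + 1 * h = y := by rw [hh]; ring
  simp only [hGdef, hxy, mul_one] at hG1
  have : c * h ^ 2 / (1 + s) ≤ (f' y - f' x) * h := by linarith
  simpa [hsdef, hh] using this
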